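/- Let X(1), X(2), … be a sequence of real m×n matrices admitting a minimal realization of dimension d (matrices A ∈ ℝ^{m×d}, B ∈ ℝ^{d×d}, C ∈ ℝ^{d×n} with X(t+1) = A·B^t·C for all t ≥ 0, controllability matrix [A; AB; …; AB^{d−1}] of rank d, observability matrix [C, BC, …, B^{d−1}C] of rank d). Let r = sup over t ≥ 1 of rank X(t), let l ≥ d − r, and suppose L̂ ∈ ℝ^{m(l+1)×d} and R̂ ∈ ℝ^{d×n(l+1)} satisfy L̂·R̂ = H^(1;l), and B̂ ∈ ℝ^{d×d} satisfies L̂·B̂·R̂ = H^(2;l). Let Â be the matrix of the first m rows of L̂ and Ĉ the matrix of the first n columns of R̂. Then X(t+1) = Â·B̂^t·Ĉ for all t ≥ 0. That is, a complete minimal model of the system can be constructed from the observations X(1), …, X(2l+2) via any rank-d factorization of H^(1;l). (Lemma 1, reconstruction statement.) -/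
import Mathlib


/-- The block Hankel matrix `H^(t;k)` of a sequence of `m×n` matrices `X(1), X(2), …`:
the `(k+1)×(k+1)` block matrix whose `(i,j)` block is `X(t+i+j)` for `0 ≤ i,j ≤ k`. -/
def blockHankel {m n : ℕ} (X : ℕ → Matrix (Fin m) (Fin n) ℝ) (t k : ℕ) :
    Matrix (Fin (k + 1) × Fin m) (Fin (k + 1) × Fin n) ℝ :=
  Matrix.of fun p q => X (t + (p.1 : ℕ) + (q.1 : ℕ)) p.2 q.2

/-- The controllability matrix of a realization `(A, B, C)`: the matrix obtained by
stacking the rows of `A, AB, …, AB^{d-1}`. -/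
def controllabilityMatrix {m d : ℕ} (A : Matrix (Fin m) (Fin d) ℝ)
    (B : Matrix (Fin d) (Fin d) ℝ) : Matrix (Fin d × Fin m) (Fin d) ℝ :=
  Matrix.of fun p c => (A * B ^ (p.1 : ℕ)) p.2 c

/-- The observability matrix of a realization `(A, B, C)`: the matrix obtained by
concatenating the columns of `C, BC, …, B^{d-1}C`. -/
def observabilityMatrix {n d : ℕ} (B : Matrix (Fin d) (Fin d) ℝ)
    (C : Matrix (Fin d) (Fin n) ℝ) : Matrix (Fin d) (Fin d × Fin n) ℝ :=
  Matrix.of fun c q => (B ^ (q.1 : ℕ) * C) c q.2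

namespace HoKalmanAux

open Matrix Module

/-- stacked matrix `A, AB, …, AB^k`. -/
def stackPow {m d : ℕ} (A : Matrix (Fin m) (Fin d) ℝ) (B : Matrix (Fin d) (Fin d) ℝ)
    (k : ℕ) : Matrix (Fin (k + 1) × Fin m) (Fin d) ℝ :=
  Matrix.of fun p c => (A * B ^ (p.1 : ℕ)) p.2 c

/-- Intersection of kernels of `A B^i`, `i ≤ k`. -/
def K {m d : ℕ} (A : Matrix (Fin m) (Fin d) ℝ) (B : Matrix (Fin d) (Fin d) ℝ)
    (k : ℕ) : Submodule ℝ (Fin d → ℝ) :=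
  ⨅ i ∈ Finset.range (k + 1), LinearMap.ker (A * B ^ i).mulVecLin

variable {m d : ℕ} {A : Matrix (Fin m) (Fin d) ℝ} {B : Matrix (Fin d) (Fin d) ℝ}

lemma mem_K {k : ℕ} {x : Fin d → ℝ} :
    x ∈ K A B k ↔ ∀ i ≤ k, (A * B ^ i) *ᵥ x = 0 := by
  simp [K, Nat.lt_succ_iff]

lemma K_anti {j k : ℕ} (h : j ≤ k) : K A B k ≤ K A B j := by
  intro x hx
  rw [mem_K] at hx ⊢
  exact fun i hi => hx i (hi.trans h)

lemma K_stab {k : ℕ} (h : K A B (k + 1) = K A B k) (j : ℕ) :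
    K A B k ≤ K A B j := by
  have key : ∀ j (x : Fin d → ℝ), x ∈ K A B k → (A * B ^ j) *ᵥ x = 0 := by
    intro j
    induction j with
    | zero => intro x hx; exact mem_K.mp hx 0 (Nat.zero_le _)
    | succ j ih =>
      intro x hx
      have hBx : B *ᵥ x ∈ K A B k := by
        rw [← h] at hx
        rw [mem_K]
        intro i hi
        rw [mulVec_mulVec, Matrix.mul_assoc A _ _, ← pow_succ]
        exact mem_K.mp hx (i + 1) (Nat.succ_le_succ hi)
      have := ih (B *ᵥ x) hBx
      rwa [mulVec_mulVec, Matrix.mul_assoc A _ _, ← pow_succ] at this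
  intro x hx
  rw [mem_K]
  exact fun i _ => key i x hx

lemma ker_eq_bot_of_rank {ι : Type*} [Fintype ι] {M : Matrix ι (Fin d) ℝ}
    (h : M.rank = d) : LinearMap.ker M.mulVecLin = ⊥ := by
  have h2 := LinearMap.finrank_range_add_finrank_ker M.mulVecLin
  rw [show finrank ℝ (Fin d → ℝ) = d by simp] at h2
  rw [Matrix.rank] at h
  have : finrank ℝ (LinearMap.ker M.mulVecLin) = 0 := by omega
  exact Submodule.finrank_eq_zero.mp this

lemma finrank_K_zero : finrank ℝ (K A B 0) + A.rank = d := by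
  have hK0 : K A B 0 = LinearMap.ker A.mulVecLin := by
    ext x
    rw [mem_K, LinearMap.mem_ker, Matrix.mulVecLin_apply]
    constructor
    · intro h; have := h 0 le_rfl; simpa using this
    · intro h i hi
      interval_cases i
      simpa using h
  have h2 := LinearMap.finrank_range_add_finrank_ker A.mulVecLin
  rw [show finrank ℝ (Fin d → ℝ) = d by simp] at h2
  rw [hK0, Matrix.rank]
  omega

lemma K_bot (hctrl : (controllabilityMatrix A B).rank = d)
    (l : ℕ) (hl : d - A.rank ≤ l) : K A B l = ⊥ := by
  have hker := ker_eq_bot_of_rank hctrl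
  have hbot : K A B (d - 1) = ⊥ := by
    rw [eq_bot_iff]
    intro x hx
    rw [← hker]
    rw [LinearMap.mem_ker, Matrix.mulVecLin_apply]
    funext p
    have : ((A * B ^ (p.1 : ℕ)) *ᵥ x) p.2 = 0 := by
      rw [mem_K.mp hx (p.1 : ℕ) (Nat.le_sub_one_of_lt p.1.isLt)]
      rfl
    simpa [controllabilityMatrix, Matrix.mulVec, dotProduct] using this
  have hstrict : ∀ k, K A B (k + 1) ≠ ⊥ →
      finrank ℝ (K A B (k + 1)) < finrank ℝ (K A B k) := by
    intro k hne
    have hle : K A B (k + 1) ≤ K A B k := K_anti (Nat.le_succ k)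
    rcases lt_or_eq_of_le hle with hlt | heq
    · exact Submodule.finrank_lt_finrank_of_lt hlt
    · exfalso
      have := K_stab heq (d - 1)
      rw [hbot] at this
      have hk : K A B k = ⊥ := le_bot_iff.mp this
      exact hne (le_bot_iff.mp (heq.le.trans hk.le))
  have hcount : ∀ k, K A B k ≠ ⊥ →
      finrank ℝ (K A B k) + k ≤ finrank ℝ (K A B 0) := by
    intro k
    induction k with
    | zero => intro _; omega
    | succ k ih =>
      intro hne
      have hkne : K A B k ≠ ⊥ := by
        intro hk
        exact hne (le_bot_iff.mp (hk ▸ K_anti (Nat.le_succ k)))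
      have := hstrict k hne
      have := ih hkne
      omega
  by_contra hne
  have h1 := hcount l hne
  have h2 := finrank_K_zero (A := A) (B := B)
  have h3 : finrank ℝ (K A B l) = 0 := by omega
  exact hne (Submodule.finrank_eq_zero.mp h3)

lemma exists_leftInverse (hctrl : (controllabilityMatrix A B).rank = d)
    (l : ℕ) (hl : d - A.rank ≤ l) :
    ∃ G : Matrix (Fin d) (Fin (l + 1) × Fin m) ℝ, G * stackPow A B l = 1 := by
  have hker : LinearMap.ker (stackPow A B l).mulVecLin = ⊥ := by
    rw [eq_bot_iff]
    intro x hx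
    rw [LinearMap.mem_ker, Matrix.mulVecLin_apply] at hx
    have hxK : x ∈ K A B l := by
      rw [mem_K]
      intro i hi
      funext a
      have := congrFun hx (⟨i, Nat.lt_succ_of_le hi⟩, a)
      simpa [stackPow, Matrix.mulVec, dotProduct] using this
    rw [K_bot hctrl l hl] at hxK
    simpa using hxK
  obtain ⟨g, hg⟩ := (stackPow A B l).mulVecLin.exists_leftInverse_of_injective hker
  refine ⟨LinearMap.toMatrix' g, ?_⟩
  have h1 : LinearMap.toMatrix' (g.comp (stackPow A B l).mulVecLin)
      = LinearMap.toMatrix' g * stackPow A B l := by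
    rw [LinearMap.toMatrix'_comp, ← Matrix.toLin'_apply', LinearMap.toMatrix'_toLin']
  rw [← h1, hg, LinearMap.toMatrix'_id]

lemma stackPow_mul_apply {k : ℕ} (M : Matrix (Fin d) (Fin k) ℝ) (l : ℕ)
    (p : Fin (l + 1) × Fin m) (c : Fin k) :
    (stackPow A B l * M) p c = (A * B ^ (p.1 : ℕ) * M) p.2 c := by
  rw [Matrix.mul_apply, Matrix.mul_apply]
  rfl

lemma mul_stackPowT_apply {n : ℕ} {ι : Type*} (C : Matrix (Fin d) (Fin n) ℝ)
    (M : Matrix ι (Fin d) ℝ) (l : ℕ) (c : ι) (q : Fin (l + 1) × Fin n) :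
    (M * (stackPow Cᵀ Bᵀ l)ᵀ) c q = (M * (B ^ (q.1 : ℕ) * C)) c q.2 := by
  rw [Matrix.mul_apply, Matrix.mul_apply]
  refine Finset.sum_congr rfl fun e _ => ?_
  congr 1
  show stackPow Cᵀ Bᵀ l q e = (B ^ (q.1 : ℕ) * C) e q.2
  simp [stackPow, ← Matrix.transpose_pow, ← Matrix.transpose_mul]

end HoKalmanAux

open HoKalmanAux Matrix

/-- **Lemma 1 (reconstruction statement).**
Let `X(1), X(2), …` admit a minimal realization of dimension `d`, let
`r = sup_{t ≥ 1} rank X(t)` and `l ≥ d - r`. If `Lh·Rh = H^(1;l)` and `Lh·Bh·Rh = H^(2;l)`,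
and `Ah` (resp. `Ch`) is the matrix of the first `m` rows of `Lh` (resp. first `n` columns
of `Rh`), then `X(t+1) = Ah·Bh^t·Ch` for all `t ≥ 0`: a complete minimal model of the system
is obtained from the observations `X(1), …, X(2l+2)` via any rank-`d` factorization
of `H^(1;l)`. -/
theorem hoKalman_reconstruction (m n d : ℕ) (hm : 0 < m) (hn : 0 < n) (hd : 0 < d)
    (X : ℕ → Matrix (Fin m) (Fin n) ℝ)
    (A : Matrix (Fin m) (Fin d) ℝ) (B : Matrix (Fin d) (Fin d) ℝ)
    (C : Matrix (Fin d) (Fin n) ℝ)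
    (hX : ∀ t : ℕ, X (t + 1) = A * B ^ t * C)
    (hctrl : (controllabilityMatrix A B).rank = d)
    (hobs : (observabilityMatrix B C).rank = d)
    (r : ℕ) (hr : r = ⨆ t : ℕ, (X (t + 1)).rank)
    (l : ℕ) (hl : d - r ≤ l)
    (Lh : Matrix (Fin (l + 1) × Fin m) (Fin d) ℝ)
    (Rh : Matrix (Fin d) (Fin (l + 1) × Fin n) ℝ)
    (Bh : Matrix (Fin d) (Fin d) ℝ)
    (hfact : Lh * Rh = blockHankel X 1 l)
    (hshift : Lh * Bh * Rh = blockHankel X 2 l)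
    (Ah : Matrix (Fin m) (Fin d) ℝ) (hAh : Ah = Matrix.of fun a c => Lh (0, a) c)
    (Ch : Matrix (Fin d) (Fin n) ℝ) (hCh : Ch = Matrix.of fun c b => Rh c (0, b)) :
    ∀ t : ℕ, X (t + 1) = Ah * Bh ^ t * Ch := by
  -- `r` is at most the rank of `A` and of `C`
  have hrA : r ≤ A.rank := by
    rw [hr]
    exact ciSup_le fun t => by
      rw [hX t]
      exact (Matrix.rank_mul_le_left _ _).trans (Matrix.rank_mul_le_left _ _)
  have hrC : r ≤ C.rank := by
    rw [hr]
    exact ciSup_le fun t => by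
      rw [hX t]
      exact Matrix.rank_mul_le_right _ _
  -- left inverse of the extended observability matrix `O`
  obtain ⟨Oi, hOi⟩ := exists_leftInverse hctrl l (le_trans (Nat.sub_le_sub_left hrA d) hl)
  -- right inverse of the extended controllability matrix `Q`
  have hobs' : (controllabilityMatrix Cᵀ Bᵀ).rank = d := by
    have he : controllabilityMatrix Cᵀ Bᵀ = (observabilityMatrix B C)ᵀ := by
      ext p c
      simp [controllabilityMatrix, observabilityMatrix, ← Matrix.transpose_pow,
        ← Matrix.transpose_mul]
    rw [he, Matrix.rank_transpose]
    exact hobs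
  have hlC : d - Cᵀ.rank ≤ l := by
    rw [Matrix.rank_transpose]
    exact le_trans (Nat.sub_le_sub_left hrC d) hl
  obtain ⟨G, hG⟩ := exists_leftInverse hobs' l hlC
  set O : Matrix (Fin (l + 1) × Fin m) (Fin d) ℝ := stackPow A B l with hO
  set Q : Matrix (Fin d) (Fin (l + 1) × Fin n) ℝ := (stackPow Cᵀ Bᵀ l)ᵀ with hQdef
  set Qi : Matrix (Fin (l + 1) × Fin n) (Fin d) ℝ := Gᵀ with hQidef
  have hQi : Q * Qi = 1 := by
    have := congrArg Matrix.transpose hG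
    rwa [Matrix.transpose_mul, Matrix.transpose_one] at this
  -- Hankel factorizations through `O` and `Q`
  have hOQ : O * Q = blockHankel X 1 l := by
    ext p q
    rw [hQdef, mul_stackPowT_apply, hO, stackPow_mul_apply]
    have he : A * B ^ (p.1 : ℕ) * (B ^ (q.1 : ℕ) * C)
        = A * B ^ ((p.1 : ℕ) + (q.1 : ℕ)) * C := by
      rw [← Matrix.mul_assoc, Matrix.mul_assoc A (B ^ (p.1 : ℕ)) (B ^ (q.1 : ℕ)), ← pow_add]
    rw [he, ← hX ((p.1 : ℕ) + (q.1 : ℕ))]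
    show X ((p.1 : ℕ) + (q.1 : ℕ) + 1) p.2 q.2 = X (1 + (p.1 : ℕ) + (q.1 : ℕ)) p.2 q.2
    rw [show (p.1 : ℕ) + (q.1 : ℕ) + 1 = 1 + (p.1 : ℕ) + (q.1 : ℕ) by omega]
  have hOBQ : O * B * Q = blockHankel X 2 l := by
    ext p q
    rw [hQdef, mul_stackPowT_apply, Matrix.mul_assoc, hO, stackPow_mul_apply]
    have he : A * B ^ (p.1 : ℕ) * (B * (B ^ (q.1 : ℕ) * C))
        = A * B ^ ((p.1 : ℕ) + (q.1 : ℕ) + 1) * C := by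
      rw [← Matrix.mul_assoc B, ← pow_succ', ← Matrix.mul_assoc,
        Matrix.mul_assoc A (B ^ (p.1 : ℕ)) (B ^ ((q.1 : ℕ) + 1)), ← pow_add]
      ring_nf
    rw [he, ← hX ((p.1 : ℕ) + (q.1 : ℕ) + 1)]
    show X ((p.1 : ℕ) + (q.1 : ℕ) + 1 + 1) p.2 q.2 = X (2 + (p.1 : ℕ) + (q.1 : ℕ)) p.2 q.2
    rw [show (p.1 : ℕ) + (q.1 : ℕ) + 1 + 1 = 2 + (p.1 : ℕ) + (q.1 : ℕ) by omega]
  have hLR : Lh * Rh = O * Q := hfact.trans hOQ.symm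
  have hLBR : Lh * Bh * Rh = O * B * Q := hshift.trans hOBQ.symm
  -- the change-of-basis matrices
  have hLS : Lh * (Rh * Qi) = O := by
    rw [← Matrix.mul_assoc, hLR, Matrix.mul_assoc, hQi, Matrix.mul_one]
  have hTR : Oi * Lh * Rh = Q := by
    rw [Matrix.mul_assoc, hLR, ← Matrix.mul_assoc, hOi, Matrix.one_mul]
  have hTS : (Oi * Lh) * (Rh * Qi) = 1 := by
    rw [Matrix.mul_assoc Oi Lh (Rh * Qi), hLS, hOi]
  have hST : (Rh * Qi) * (Oi * Lh) = 1 := mul_eq_one_comm.mp hTS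
  have hTBS : (Oi * Lh) * Bh * (Rh * Qi) = B := by
    calc (Oi * Lh) * Bh * (Rh * Qi)
        = Oi * ((Lh * Bh * Rh) * Qi) := by simp only [Matrix.mul_assoc]
      _ = Oi * ((O * B * Q) * Qi) := by rw [hLBR]
      _ = (Oi * O) * (B * (Q * Qi)) := by simp only [Matrix.mul_assoc]
      _ = B := by rw [hOi, hQi, Matrix.one_mul, Matrix.mul_one]
  -- recovering A, B, C up to the similarity transform
  have hAS : Ah * (Rh * Qi) = A := by
    ext a c
    have h2 : (Lh * (Rh * Qi)) (0, a) c = A a c := by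
      rw [hLS, hO]
      show (A * B ^ (((0 : Fin (l + 1))) : ℕ)) a c = A a c
      simp
    rw [← h2, Matrix.mul_apply, Matrix.mul_apply]
    refine Finset.sum_congr rfl fun e _ => ?_
    rw [hAh]
    rfl
  have hAT : Ah = A * (Oi * Lh) := by
    calc Ah = Ah * ((Rh * Qi) * (Oi * Lh)) := by rw [hST, Matrix.mul_one]
      _ = (Ah * (Rh * Qi)) * (Oi * Lh) := by simp only [Matrix.mul_assoc]
      _ = A * (Oi * Lh) := by rw [hAS]
  have hTC : (Oi * Lh) * Ch = C := by
    ext c b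
    have h2 : (Oi * Lh * Rh) c (0, b) = C c b := by
      rw [hTR, hQdef]
      show stackPow Cᵀ Bᵀ l (0, b) c = C c b
      show (Cᵀ * Bᵀ ^ (((0 : Fin (l + 1))) : ℕ)) b c = C c b
      simp
    rw [← h2, Matrix.mul_apply, Matrix.mul_apply]
    refine Finset.sum_congr rfl fun e _ => ?_
    rw [hCh]
    rfl
  have hCS : Ch = (Rh * Qi) * C := by
    calc Ch = ((Rh * Qi) * (Oi * Lh)) * Ch := by rw [hST, Matrix.one_mul]
      _ = (Rh * Qi) * ((Oi * Lh) * Ch) := by simp only [Matrix.mul_assoc]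
      _ = (Rh * Qi) * C := by rw [hTC]
  have hBS : Bh = (Rh * Qi) * B * (Oi * Lh) := by
    calc Bh = ((Rh * Qi) * (Oi * Lh)) * Bh * ((Rh * Qi) * (Oi * Lh)) := by
          rw [hST, Matrix.one_mul, Matrix.mul_one]
      _ = (Rh * Qi) * (((Oi * Lh) * Bh * (Rh * Qi)) * (Oi * Lh)) := by
          simp only [Matrix.mul_assoc]
      _ = (Rh * Qi) * (B * (Oi * Lh)) := by rw [hTBS]
      _ = (Rh * Qi) * B * (Oi * Lh) := by simp only [Matrix.mul_assoc]
  have hpow : ∀ t : ℕ, Bh ^ t = (Rh * Qi) * B ^ t * (Oi * Lh) := by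
    intro t
    induction t with
    | zero => rw [pow_zero, pow_zero, Matrix.mul_one, hST]
    | succ t ih =>
      calc Bh ^ (t + 1) = Bh ^ t * Bh := pow_succ Bh t
        _ = ((Rh * Qi) * B ^ t * (Oi * Lh)) * ((Rh * Qi) * B * (Oi * Lh)) := by
            rw [ih, hBS]
        _ = (Rh * Qi) * (B ^ t * (((Oi * Lh) * (Rh * Qi)) * (B * (Oi * Lh)))) := by
            simp only [Matrix.mul_assoc]
        _ = (Rh * Qi) * (B ^ t * (B * (Oi * Lh))) := by rw [hTS, Matrix.one_mul]
        _ = (Rh * Qi) * ((B ^ t * B) * (Oi * Lh)) := by simp only [Matrix.mul_assoc]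
        _ = (Rh * Qi) * B ^ (t + 1) * (Oi * Lh) := by rw [← pow_succ]; simp only [Matrix.mul_assoc]
  intro t
  rw [hX t, hAT, hCS, hpow t]
  calc A * B ^ t * C
      = A * (((Oi * Lh) * (Rh * Qi)) * (B ^ t * (((Oi * Lh) * (Rh * Qi)) * C))) := by
        rw [hTS, Matrix.one_mul, Matrix.one_mul, Matrix.mul_assoc]
    _ = A * (Oi * Lh) * ((Rh * Qi) * B ^ t * (Oi * Lh)) * ((Rh * Qi) * C) := by
        simp only [Matrix.mul_assoc]
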